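/- Let 𝓗 be a complex Hilbert space, let W be a bounded operator on 𝓗 which is an orthogonal projection (W = W* = W²), and let (T_δ)_{δ>0} be a family of bounded self-adjoint operators on 𝓗 with T_δ² ≤ T_δ for every δ > 0, converging weakly to W as δ → 0 (i.e. ⟨ψ, T_δ φ⟩ → ⟨ψ, W φ⟩ for all ψ, φ ∈ 𝓗). Then T_δ converges strongly to W as δ → 0: ‖(W − T_δ)u‖ → 0 for every u ∈ 𝓗. -/

import Mathlib

open scoped InnerProductSpace Topology
open Filter

/-- **Weak-to-strong convergence upgrade (final step of Theorem 5.1).** If `W` is an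
orthogonal projection and `(T_δ)_{δ>0}` is a family of bounded self-adjoint operators
with `T_δ² ≤ T_δ` converging weakly to `W` as `δ → 0⁺`, then `T_δ → W` strongly. -/
theorem stmt_14 {H : Type*} [NormedAddCommGroup H] [InnerProductSpace ℂ H] [CompleteSpace H]
    (W : H →L[ℂ] H) (hWsa : IsSelfAdjoint W) (hWproj : W.comp W = W)
    (T : ℝ → H →L[ℂ] H)
    (hTsa : ∀ δ : ℝ, 0 < δ → IsSelfAdjoint (T δ))
    (hTsq : ∀ δ : ℝ, 0 < δ → ∀ ψ : H, (⟪ψ, T δ (T δ ψ)⟫_ℂ).re ≤ (⟪ψ, T δ ψ⟫_ℂ).re)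
    (hweak : ∀ ψ φ : H,
      Tendsto (fun δ => ⟪ψ, T δ φ⟫_ℂ) (𝓝[>] (0 : ℝ)) (nhds ⟪ψ, W φ⟫_ℂ)) :
    ∀ u : H, Tendsto (fun δ => ‖(W - T δ) u‖) (𝓝[>] (0 : ℝ)) (nhds 0) := by
  intro u
  have hWsym := hWsa.isSymmetric
  have hWW : ⟪u, W u⟫_ℂ = ⟪W u, W u⟫_ℂ := by
    conv_lhs => rw [← hWproj]
    exact (hWsym u (W u)).symm
  set f : ℝ → ℝ := fun δ =>
    (⟪u, W u⟫_ℂ).re - 2 * (⟪W u, T δ u⟫_ℂ).re + (⟪u, T δ u⟫_ℂ).re with hf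
  have key : ∀ᶠ δ in 𝓝[>] (0 : ℝ), ‖(W - T δ) u‖ ^ 2 ≤ f δ := by
    filter_upwards [self_mem_nhdsWithin] with δ (hδ : 0 < δ)
    have hTsym := (hTsa δ hδ).isSymmetric
    have h1 : ‖(W - T δ) u‖ ^ 2 = (⟪(W - T δ) u, (W - T δ) u⟫_ℂ).re := by
      rw [← inner_self_eq_norm_sq (𝕜 := ℂ)]
      rfl
    have h2 : ⟪(W - T δ) u, (W - T δ) u⟫_ℂ
        = ⟪W u, W u⟫_ℂ - ⟪W u, T δ u⟫_ℂ - ⟪T δ u, W u⟫_ℂ + ⟪T δ u, T δ u⟫_ℂ := by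
      simp only [ContinuousLinearMap.sub_apply, inner_sub_sub_self]
    have h3 : (⟪T δ u, W u⟫_ℂ).re = (⟪W u, T δ u⟫_ℂ).re := by
      simpa using inner_re_symm (𝕜 := ℂ) (T δ u) (W u)
    have h4 : (⟪T δ u, T δ u⟫_ℂ).re ≤ (⟪u, T δ u⟫_ℂ).re := by
      have he : ⟪T δ u, T δ u⟫_ℂ = ⟪u, T δ (T δ u)⟫_ℂ := hTsym u (T δ u)
      rw [he]; exact hTsq δ hδ u
    have h5 : (⟪W u, W u⟫_ℂ).re = (⟪u, W u⟫_ℂ).re := by rw [hWW]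
    rw [h1, h2, hf]
    simp only [Complex.add_re, Complex.sub_re]
    linarith
  have hlim1 : Tendsto (fun δ => (⟪W u, T δ u⟫_ℂ).re) (𝓝[>] (0 : ℝ))
      (nhds ((⟪u, W u⟫_ℂ).re)) := by
    have := (Complex.continuous_re.tendsto _).comp (hweak (W u) u)
    rwa [← hWW] at this
  have hlim2 : Tendsto (fun δ => (⟪u, T δ u⟫_ℂ).re) (𝓝[>] (0 : ℝ))
      (nhds ((⟪u, W u⟫_ℂ).re)) := (Complex.continuous_re.tendsto _).comp (hweak u u)
  have hflim : Tendsto f (𝓝[>] (0 : ℝ)) (nhds 0) := by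
    have h := (((tendsto_const_nhds (x := (⟪u, W u⟫_ℂ).re)).sub
      (hlim1.const_mul 2)).add hlim2 :)
    have h0 : (⟪u, W u⟫_ℂ).re - 2 * (⟪u, W u⟫_ℂ).re + (⟪u, W u⟫_ℂ).re = 0 := by ring
    rw [h0] at h
    exact h
  have hsq : Tendsto (fun δ => ‖(W - T δ) u‖ ^ 2) (𝓝[>] (0 : ℝ)) (nhds 0) :=
    squeeze_zero' (Eventually.of_forall fun _ => sq_nonneg _) key hflim
  have h := hsq.sqrt
  simp only [Real.sqrt_zero] at h
  refine h.congr fun δ => ?_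
  rw [Real.sqrt_sq (norm_nonneg _)]
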